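/- Let M be a real convex monoid. For all m₁, m₂ ∈ M, the invertible fraction is supermultiplicative: IF(m₁·m₂) ≥ IF(m₁)·IF(m₂). -/

import Mathlib

open Finsupp
open scoped Classical NNReal

/-- `p` is a finitely supported distribution: its values sum to `1`. -/
def IsDist {R X : Type*} [CommSemiring R] (p : X →₀ R) : Prop :=
  p.sum (fun _ r => r) = 1

/-- Convolution: `(q ∗ p)(m) = ∑_{g₂·g₁ = m} q(g₂) p(g₁)`. -/
noncomputable def dconv {R M : Type*} [CommSemiring R] [Monoid M]
    (q p : M →₀ R) : M →₀ R :=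
  q.sum fun g₂ b => p.sum fun g₁ a => Finsupp.single (g₂ * g₁) (b * a)

/-- The invertible support of `m`. -/
def Isupp {M : Type*} [Monoid M]
    (pm : (M →₀ ℝ≥0) → M) (m : M) : Set M :=
  {m' | IsUnit m' ∧ ∃ P : M →₀ ℝ≥0, IsDist P ∧ pm P = m ∧ P m' ≠ 0}

/-- `m` is weakly invertible if it is the image under `pm` of a distribution supported
on the units. -/
def WeaklyInv {M : Type*} [Monoid M]
    (pm : (M →₀ ℝ≥0) → M) (m : M) : Prop :=
  ∃ p : M →₀ ℝ≥0, IsDist p ∧ (∀ x ∈ p.support, IsUnit x) ∧ pm p = m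

/-- The total mass a distribution puts on the units of `M`. -/
noncomputable def unitMass {M : Type*} [Monoid M] (P : M →₀ ℝ≥0) : ℝ≥0 :=
  P.sum fun m' r => if IsUnit m' then r else 0

/-- The invertible fraction `IF(m) = sup {∑_{m'∈M*} P(m') : P ∈ D(M), pm(P) = m}`. -/
noncomputable def IF {M : Type*} [Monoid M]
    (pm : (M →₀ ℝ≥0) → M) (m : M) : ℝ≥0 :=
  sSup {s : ℝ≥0 | ∃ P : M →₀ ℝ≥0, IsDist P ∧ pm P = m ∧ s = unitMass P}

lemma dconv_sum {M : Type*} [Monoid M] (Q P : M →₀ ℝ≥0) (f : M → ℝ≥0 → ℝ≥0)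
    (hf0 : ∀ m, f m 0 = 0) (hfadd : ∀ m a b, f m (a + b) = f m a + f m b) :
    (dconv Q P).sum f = Q.sum fun g₂ b => P.sum fun g₁ a => f (g₂ * g₁) (b * a) := by
  unfold dconv
  rw [Finsupp.sum_sum_index hf0 hfadd]
  refine Finsupp.sum_congr fun g₂ _ => ?_
  rw [Finsupp.sum_sum_index hf0 hfadd]
  exact Finsupp.sum_congr fun g₁ _ => Finsupp.sum_single_index (hf0 _)

lemma IsDist.dconv' {M : Type*} [Monoid M] {Q P : M →₀ ℝ≥0}
    (hQ : IsDist Q) (hP : IsDist P) : IsDist (dconv Q P) := by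
  unfold IsDist
  rw [dconv_sum Q P _ (fun _ => rfl) (fun _ _ _ => rfl)]
  calc (Q.sum fun g₂ b => P.sum fun g₁ a => b * a)
      = Q.sum fun g₂ b => b * (P.sum fun _ a => a) := by
        refine Finsupp.sum_congr fun g₂ _ => ?_
        rw [Finsupp.mul_sum]
    _ = 1 := by rw [hP]; simpa [IsDist] using hQ

lemma unitMass_le_one {M : Type*} [Monoid M] {P : M →₀ ℝ≥0} (hP : IsDist P) :
    unitMass P ≤ 1 := by
  rw [← hP]
  refine Finset.sum_le_sum fun i _ => ?_
  dsimp only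
  split <;> simp

lemma unitMass_dconv_ge {M : Type*} [Monoid M] (Q P : M →₀ ℝ≥0) :
    unitMass Q * unitMass P ≤ unitMass (dconv Q P) := by
  unfold unitMass
  rw [dconv_sum Q P _ (fun m => by simp) (fun m a b => by split <;> simp)]
  rw [Finsupp.sum_mul]
  refine Finset.sum_le_sum fun g₂ _ => ?_
  dsimp only
  rw [Finsupp.mul_sum]
  refine Finset.sum_le_sum fun g₁ _ => ?_
  dsimp only
  by_cases h₂ : IsUnit g₂
  · by_cases h₁ : IsUnit g₁
    · simp [h₁, h₂, h₂.mul h₁]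
    · simp [h₁, h₂]
  · simp only [h₂, if_false, zero_mul]
    exact zero_le

lemma mem_IFset {M : Type*} [Monoid M] (pm : (M →₀ ℝ≥0) → M) {m : M}
    {P : M →₀ ℝ≥0} (hP : IsDist P) (hpm : pm P = m) :
    unitMass P ∈ {s : ℝ≥0 | ∃ P : M →₀ ℝ≥0, IsDist P ∧ pm P = m ∧ s = unitMass P} :=
  ⟨P, hP, hpm, rfl⟩

lemma IFset_bdd {M : Type*} [Monoid M] (pm : (M →₀ ℝ≥0) → M) (m : M) :
    BddAbove {s : ℝ≥0 | ∃ P : M →₀ ℝ≥0, IsDist P ∧ pm P = m ∧ s = unitMass P} :=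
  ⟨1, fun s ⟨P, hP, _, hs⟩ => hs ▸ unitMass_le_one hP⟩

lemma IsDist.single {M : Type*} [Monoid M] (m : M) :
    IsDist (Finsupp.single m (1 : ℝ≥0)) := by
  simp [IsDist, Finsupp.sum_single_index]

/-- In a real convex monoid, the invertible fraction is supermultiplicative:
`IF(m₁·m₂) ≥ IF(m₁)·IF(m₂)`. -/
theorem IF_supermultiplicative {M : Type*} [Monoid M]
    (pm : (M →₀ ℝ≥0) → M)
    (hδ : ∀ m : M, pm (Finsupp.single m 1) = m)
    (hμ : ∀ Q : (M →₀ ℝ≥0) →₀ ℝ≥0, IsDist Q → (∀ p ∈ Q.support, IsDist p) →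
      pm (Q.sum fun p r => r • p) = pm (Finsupp.mapDomain pm Q))
    (hmul : ∀ p q : M →₀ ℝ≥0, IsDist p → IsDist q → pm (dconv q p) = pm q * pm p)
    (m₁ m₂ : M) :
    IF pm m₁ * IF pm m₂ ≤ IF pm (m₁ * m₂) := by
  set S := fun m => {s : ℝ≥0 | ∃ P : M →₀ ℝ≥0, IsDist P ∧ pm P = m ∧ s = unitMass P} with hS
  have key : ∀ a ∈ S m₁, ∀ b ∈ S m₂, a * b ≤ IF pm (m₁ * m₂) := by
    rintro a ⟨Q, hQ, hQm, rfl⟩ b ⟨P, hP, hPm, rfl⟩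
    refine le_trans (unitMass_dconv_ge Q P) (le_csSup (IFset_bdd pm _) ?_)
    exact mem_IFset pm (hQ.dconv' hP) (by rw [hmul P Q hP hQ, hQm, hPm])
  have ne₁ : (S m₁).Nonempty := ⟨_, mem_IFset pm (IsDist.single m₁) (hδ m₁)⟩
  have ne₂ : (S m₂).Nonempty := ⟨_, mem_IFset pm (IsDist.single m₂) (hδ m₂)⟩
  show sSup (S m₁) * sSup (S m₂) ≤ IF pm (m₁ * m₂)
  by_cases h2 : sSup (S m₂) = 0
  · simp [h2]
  rw [← le_div_iff₀ (pos_iff_ne_zero.mpr h2)]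
  refine csSup_le ne₁ fun a ha => ?_
  by_cases ha0 : a = 0
  · simp [ha0]
  rw [le_div_iff₀ (pos_iff_ne_zero.mpr h2), mul_comm, ← le_div_iff₀ (pos_iff_ne_zero.mpr ha0)]
  refine csSup_le ne₂ fun b hb => ?_
  rw [le_div_iff₀ (pos_iff_ne_zero.mpr ha0), mul_comm]
  exact key a ha b hb
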